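/- Let d ≥ 1 and q be integers with γ := q − d > 1. Let p_1, …, p_d ∈ [0, 1/γ]^q be subdistributions. Then for every color c ∈ [q], g_c(p_1, …, p_d) · Σ_{i=1}^d p_i(c) ≤ (1/q) · exp(−γ/q + 1/(γ−1)), where g is the coloring tree recursion. -/

import Mathlib

open Finset

/-- The coloring tree recursion:
`g_c(p_1, …, p_d) = Π_i (1 − p_i(c)) / Σ_b Π_i (1 − p_i(b))`. -/
noncomputable def colorRec {q d : ℕ} (p : Fin d → Fin q → ℝ) (c : Fin q) : ℝ :=
  (∏ i, (1 - p i c)) / (∑ b, ∏ i, (1 - p i b))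

private lemma sum_exp_aux {n : ℕ} (hn : 0 < (n : ℝ)) (x : Fin n → ℝ) :
    (n : ℝ) * Real.exp ((∑ b, x b) / n) ≤ ∑ b, Real.exp (x b) := by
  set m : ℝ := (∑ b, x b) / n with hm
  have hnm : (n : ℝ) * m = ∑ b, x b := by
    rw [hm]; field_simp
  have h1 : ∀ b : Fin n, Real.exp m * (1 + (x b - m)) ≤ Real.exp (x b) := by
    intro b
    have h2 : 1 + (x b - m) ≤ Real.exp (x b - m) := by
      have := Real.add_one_le_exp (x b - m); linarith
    calc Real.exp m * (1 + (x b - m)) ≤ Real.exp m * Real.exp (x b - m) :=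
          mul_le_mul_of_nonneg_left h2 (Real.exp_pos m).le
      _ = Real.exp (x b) := by rw [← Real.exp_add]; ring_nf
  have h3 : ∑ b, Real.exp m * (1 + (x b - m)) ≤ ∑ b, Real.exp (x b) :=
    Finset.sum_le_sum fun b _ => h1 b
  have h4 : ∑ b, Real.exp m * (1 + (x b - m)) = (n : ℝ) * Real.exp m := by
    rw [← Finset.mul_sum]
    have : ∑ b : Fin n, (1 + (x b - m)) = (n : ℝ) := by
      rw [Finset.sum_add_distrib, Finset.sum_sub_distrib, Finset.sum_const,
        Finset.sum_const, Finset.card_fin, nsmul_eq_mul, nsmul_eq_mul]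
      rw [← hnm]; ring
    rw [this]; ring
  linarith [h3, h4]

/-- If `γ := q − d > 1` and the inputs are subdistributions with entries at most `1/γ`, then
`g_c · Σ_i p_i(c) ≤ (1/q)·exp(−γ/q + 1/(γ−1))`. -/
theorem colorRec_product_bound (d q : ℕ) (hd : 1 ≤ d) (hγ : 1 < (q : ℝ) - d)
    (p : Fin d → Fin q → ℝ)
    (h0 : ∀ i c, 0 ≤ p i c) (hB : ∀ i c, p i c ≤ 1 / ((q : ℝ) - d))
    (hsub : ∀ i, ∑ c, p i c ≤ 1) :
    ∀ c, colorRec p c * ∑ i, p i c ≤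
      (1 / (q : ℝ)) *
        Real.exp (-(((q : ℝ) - d) / q) + 1 / (((q : ℝ) - d) - 1)) := by
  intro c
  have hd1 : (1 : ℝ) ≤ d := by exact_mod_cast hd
  have hq0 : (0 : ℝ) < q := by linarith
  set γ : ℝ := (q : ℝ) - d with hγdef
  have hγ1 : (0 : ℝ) < γ - 1 := by linarith
  have hγ0 : (0 : ℝ) < γ := by linarith
  set C : ℝ := γ / (γ - 1) with hCdef
  have hCγ : C * (γ - 1) = γ := div_mul_cancel₀ _ (by linarith)
  have hC0 : 0 < C := div_pos hγ0 hγ1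
  -- pointwise factor bounds
  have key : ∀ (i : Fin d) (b : Fin q), Real.exp (-(C * p i b)) ≤ 1 - p i b := by
    intro i b
    have hx0 := h0 i b
    have hxγ : p i b * γ ≤ 1 := by
      have := hB i b
      rw [le_div_iff₀ hγ0] at this
      linarith
    have h1x : 0 < 1 - p i b := by
      nlinarith
    have hq1 : 1 ≤ (1 - p i b) * (1 + C * p i b) := by
      nlinarith [mul_nonneg hx0 (by linarith : (0:ℝ) ≤ 1 - p i b * γ), hCγ, hγ1,
        mul_nonneg hx0 hx0]
    have h2 : 1 + C * p i b ≤ Real.exp (C * p i b) := by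
      have := Real.add_one_le_exp (C * p i b); linarith
    have h3 : 1 ≤ (1 - p i b) * Real.exp (C * p i b) := by
      calc (1:ℝ) ≤ (1 - p i b) * (1 + C * p i b) := hq1
        _ ≤ (1 - p i b) * Real.exp (C * p i b) :=
          mul_le_mul_of_nonneg_left h2 h1x.le
    rw [Real.exp_neg, inv_eq_one_div, div_le_iff₀ (Real.exp_pos _)]
    linarith [h3]
  have hfac : ∀ (i : Fin d) (b : Fin q), 0 ≤ 1 - p i b := fun i b =>
    le_trans (Real.exp_pos _).le (key i b)
  have hS0 : ∀ b : Fin q, 0 ≤ ∑ i, p i b := fun b =>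
    Finset.sum_nonneg fun i _ => h0 i b
  -- product lower bound
  have hPlb : ∀ b : Fin q,
      Real.exp (-(C * ∑ i, p i b)) ≤ ∏ i, (1 - p i b) := by
    intro b
    have he : Real.exp (-(C * ∑ i, p i b)) = ∏ i, Real.exp (-(C * p i b)) := by
      rw [← Real.exp_sum]
      congr 1
      rw [Finset.mul_sum, ← Finset.sum_neg_distrib]
    rw [he]
    exact Finset.prod_le_prod (fun i _ => (Real.exp_pos _).le) (fun i _ => key i b)
  -- product upper bound
  have hPub : ∀ b : Fin q, ∏ i, (1 - p i b) ≤ Real.exp (-(∑ i, p i b)) := by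
    intro b
    have he : Real.exp (-(∑ i, p i b)) = ∏ i, Real.exp (-(p i b)) := by
      rw [← Real.exp_sum, ← Finset.sum_neg_distrib]
    rw [he]
    refine Finset.prod_le_prod (fun i _ => hfac i b) (fun i _ => ?_)
    have := Real.add_one_le_exp (-(p i b)); linarith
  -- total mass bound
  have hT : ∑ b, ∑ i, p i b ≤ (d : ℝ) := by
    rw [Finset.sum_comm]
    calc ∑ i : Fin d, ∑ b, p i b ≤ ∑ i : Fin d, (1 : ℝ) :=
          Finset.sum_le_sum fun i _ => hsub i
      _ = (d : ℝ) := by simp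
  -- denominator lower bound
  have hDlb : (q : ℝ) * Real.exp (-(C * d) / q) ≤ ∑ b, ∏ i, (1 - p i b) := by
    have h1 : ∑ b : Fin q, Real.exp (-(C * ∑ i, p i b)) ≤ ∑ b, ∏ i, (1 - p i b) :=
      Finset.sum_le_sum fun b _ => hPlb b
    have h2 : (q : ℝ) * Real.exp ((∑ b : Fin q, -(C * ∑ i, p i b)) / q) ≤
        ∑ b : Fin q, Real.exp (-(C * ∑ i, p i b)) :=
      sum_exp_aux hq0 _
    have hsum : ∑ b : Fin q, -(C * ∑ i, p i b) = -(C * ∑ b, ∑ i, p i b) := by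
      rw [Finset.sum_neg_distrib, ← Finset.mul_sum]
    have h3 : -(C * d) / q ≤ (∑ b : Fin q, -(C * ∑ i, p i b)) / q := by
      rw [hsum, div_le_div_iff₀ hq0 hq0]
      have : C * ∑ b, ∑ i, p i b ≤ C * d :=
        mul_le_mul_of_nonneg_left hT hC0.le
      nlinarith
    have h4 : Real.exp (-(C * d) / q) ≤
        Real.exp ((∑ b : Fin q, -(C * ∑ i, p i b)) / q) := Real.exp_le_exp.mpr h3
    nlinarith [Real.exp_pos (-(C * ↑d) / ↑q)]
  -- denominator positive
  have hDpos : 0 < ∑ b, ∏ i, (1 - p i b) :=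
    lt_of_lt_of_le (mul_pos hq0 (Real.exp_pos _)) hDlb
  -- numerator bound
  have hnum : (∏ i, (1 - p i c)) * ∑ i, p i c ≤ Real.exp (-1) := by
    have h1 : (∏ i, (1 - p i c)) * ∑ i, p i c ≤
        Real.exp (-(∑ i, p i c)) * ∑ i, p i c :=
      mul_le_mul_of_nonneg_right (hPub c) (hS0 c)
    have h2 : (∑ i, p i c) ≤ Real.exp ((∑ i, p i c) - 1) := by
      have := Real.add_one_le_exp ((∑ i, p i c) - 1); linarith
    have h3 : Real.exp (-(∑ i, p i c)) * ∑ i, p i c ≤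
        Real.exp (-(∑ i, p i c)) * Real.exp ((∑ i, p i c) - 1) :=
      mul_le_mul_of_nonneg_left h2 (Real.exp_pos _).le
    have h4 : Real.exp (-(∑ i, p i c)) * Real.exp ((∑ i, p i c) - 1) =
        Real.exp (-1) := by
      rw [← Real.exp_add]; ring_nf
    linarith
  -- exponent comparison
  have hexp : (-1 : ℝ) ≤ (-(γ / q) + 1 / (γ - 1)) + -(C * d) / q := by
    have hr0 : (0:ℝ) < 1 / (γ - 1) := by positivity
    have hdq : (d : ℝ) / q ≤ 1 := by
      rw [div_le_one hq0]; linarith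
    have hCeq : C = 1 + 1 / (γ - 1) := by
      rw [hCdef]
      field_simp
      ring
    have e1 : -(C * (d:ℝ)) / q = -((d:ℝ)/q) - ((d:ℝ)/q) * (1/(γ-1)) := by
      rw [hCeq]; ring
    have e2 : γ / q + (d:ℝ) / q = 1 := by
      rw [hγdef]
      field_simp
      ring
    have e3 : ((d:ℝ)/q) * (1/(γ-1)) ≤ 1 * (1/(γ-1)) :=
      mul_le_mul_of_nonneg_right hdq hr0.le
    rw [e1]
    linarith
  -- combine
  have hfinal : Real.exp (-1) ≤
      ((1 / (q:ℝ)) * Real.exp (-(γ / q) + 1 / (γ - 1))) *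
        ((q : ℝ) * Real.exp (-(C * d) / q)) := by
    have heq : ((1 / (q:ℝ)) * Real.exp (-(γ / q) + 1 / (γ - 1))) *
        ((q : ℝ) * Real.exp (-(C * d) / q)) =
        Real.exp ((-(γ / q) + 1 / (γ - 1)) + -(C * d) / q) := by
      have hq' : (q:ℝ) ≠ 0 := hq0.ne'
      have hre : ((1 / (q:ℝ)) * Real.exp (-(γ / q) + 1 / (γ - 1))) *
          ((q : ℝ) * Real.exp (-(C * d) / q)) =
          ((1 / (q:ℝ)) * q) *
            (Real.exp (-(γ / q) + 1 / (γ - 1)) * Real.exp (-(C * d) / q)) := by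
        ring
      rw [hre, one_div_mul_cancel hq', one_mul, ← Real.exp_add]
    rw [heq]
    exact Real.exp_le_exp.mpr hexp
  rw [colorRec, div_mul_eq_mul_div, div_le_iff₀ hDpos]
  calc (∏ i, (1 - p i c)) * ∑ i, p i c ≤ Real.exp (-1) := hnum
    _ ≤ ((1 / (q:ℝ)) * Real.exp (-(γ / q) + 1 / (γ - 1))) *
        ((q : ℝ) * Real.exp (-(C * d) / q)) := hfinal
    _ ≤ ((1 / (q:ℝ)) * Real.exp (-(γ / q) + 1 / (γ - 1))) *
        (∑ b, ∏ i, (1 - p i b)) := by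
      apply mul_le_mul_of_nonneg_left hDlb
      positivity
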